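/- If d* ≥ 0 and f_{j*} = 0 for some integer j* ≥ 0, then P(Θ = ∅) = Φ_{j*}(0) · Π_{j≥j*} φ_{0,j}(0)^{m₀·…·m_{j−1}}. -/

import Mathlib

open MeasureTheory ProbabilityTheory Filter Set Metric
open scoped ENNReal NNReal Topology Classical

noncomputable section

/-- Words of the tree `U₀`: the letter at position `i` lies in `{0, …, m i − 1}`
(we use `0`-based letters instead of the paper's `{1,…,m_{i}}`). -/
def TreeValid (m : ℕ → ℕ) (u : List ℕ) : Prop :=
  ∀ i, ∀ h : i < u.length, u.get ⟨i, h⟩ < m i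

/-- The finite set of valid words of length `j`. -/
def treeWords (m : ℕ → ℕ) : ℕ → Finset (List ℕ)
  | 0 => {[]}
  | j + 1 => (treeWords m j).biUnion fun u => (Finset.range (m j)).image fun k => u ++ [k]

/-- The finite word made of the first `j` letters of `ζ`. -/
def prefixWord (ζ : ℕ → ℕ) (j : ℕ) : List ℕ := List.ofFn fun i : Fin j => ζ i

variable {Ω : Type} [MeasurableSpace Ω] {d : ℕ}

/-- Contraction ratios `L_v = diam J_v / diam J_{π(v)}`. -/
def ratioL (J : List ℕ → Ω → Set (EuclideanSpace ℝ (Fin d))) (v : List ℕ) (ω : Ω) : ℝ :=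
  diam (J v ω) / diam (J v.dropLast ω)

/-- Membership of the word `v` in the subtree `τ_u`. -/
def memTau (m : ℕ → ℕ) (X : List ℕ → Ω → Bool) (u v : List ℕ) (ω : Ω) : Prop :=
  TreeValid m v ∧ u <+: v ∧ ∀ j, u.length ≤ j → j ≤ v.length → X (v.take j) ω = true

/-- The compact set `K_u`, i.e. the points `x_ζ` for `ζ ∈ ∂τ_u`. -/
def Kset (m : ℕ → ℕ) (J : List ℕ → Ω → Set (EuclideanSpace ℝ (Fin d)))
    (X : List ℕ → Ω → Bool) (u : List ℕ) (ω : Ω) : Set (EuclideanSpace ℝ (Fin d)) :=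
  {x | ∃ ζ : ℕ → ℕ, (∀ j, u.length ≤ j → memTau m X u (prefixWord ζ j) ω) ∧
    ∀ j : ℕ, x ∈ J (prefixWord ζ j) ω}

/-- The limit set `Θ`. -/
def ThetaSet (m : ℕ → ℕ) (J : List ℕ → Ω → Set (EuclideanSpace ℝ (Fin d)))
    (X : List ℕ → Ω → Bool) (ω : Ω) : Set (EuclideanSpace ℝ (Fin d)) :=
  ⋃ u ∈ {u : List ℕ | TreeValid m u}, Kset m J X u ω

/-- Hausdorff dimension with the convention `dim ∅ = −∞`. -/
def hdimE {Y : Type*} [EMetricSpace Y] (S : Set Y) : EReal :=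
  if S = ∅ then ⊥ else ((dimH S : ℝ≥0∞) : EReal)

/-- The coefficient `α_{s,j}`. -/
def alphaCoef (m : ℕ → ℕ) (μ : ∀ j : ℕ, Measure (Fin (m j) → ℝ))
    (ν : Bool → ∀ j : ℕ, Measure (Fin (m j) → Bool)) (s : ℝ) (j : ℕ) : ℝ :=
  ∫ x, ∫ ℓ, (∑ k, ℓ k ^ s * (if x k then (1 : ℝ) else 0)) ∂μ j ∂ν true j

/-- The set of admissible `j₀` in the definition of `j̲`. -/
def jlowSet (m : ℕ → ℕ) (μ : ∀ j : ℕ, Measure (Fin (m j) → ℝ))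
    (ν : Bool → ∀ j : ℕ, Measure (Fin (m j) → Bool)) : Set ℕ :=
  {j₀ | ∀ j, j₀ ≤ j → 0 < alphaCoef m μ ν 0 j}

/-- `j̲` (meaningful when `jlowSet` is nonempty). -/
def jlow (m : ℕ → ℕ) (μ : ∀ j : ℕ, Measure (Fin (m j) → ℝ))
    (ν : Bool → ∀ j : ℕ, Measure (Fin (m j) → Bool)) : ℕ :=
  sInf (jlowSet m μ ν)

/-- The function `ρ`. -/
def rhoFn (m : ℕ → ℕ) (μ : ∀ j : ℕ, Measure (Fin (m j) → ℝ))
    (ν : Bool → ∀ j : ℕ, Measure (Fin (m j) → Bool)) (s : ℝ) : EReal :=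
  liminf (fun j : ℕ =>
    (((1 : ℝ) / j * ∑ n ∈ Finset.Ico (jlow m μ ν) j, Real.log (alphaCoef m μ ν s n) : ℝ) : EReal))
    atTop

/-- The critical dimension `d_*`. -/
def dstar (m : ℕ → ℕ) (μ : ∀ j : ℕ, Measure (Fin (m j) → ℝ))
    (ν : Bool → ∀ j : ℕ, Measure (Fin (m j) → Bool)) : EReal :=
  if (jlowSet m μ ν).Nonempty then sSup ((fun s : ℝ => (s : EReal)) '' {s | 0 < rhoFn m μ ν s})
  else ⊥

/-- The σ-field generated by the `X_v` for `v` not a strict descendant of `u`. -/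
def pastSigma (m : ℕ → ℕ) (X : List ℕ → Ω → Bool) (u : List ℕ) : MeasurableSpace Ω :=
  ⨆ v ∈ {v : List ℕ | TreeValid m v ∧ ¬(u <+: v ∧ u ≠ v)}, MeasurableSpace.comap (X v) ⊤

/-- All the standing hypotheses of the model: `(J_u)` is a family of random compacts of positive
diameter satisfying (A), (B), (C), and `(X_u)` is an independent tree-indexed Markov chain with
transition kernels `ν`, in the sense of the Markov condition (D). -/
structure Hyp (d : ℕ) (m : ℕ → ℕ) (βl βh : ℝ)
    (μ : ∀ j : ℕ, Measure (Fin (m j) → ℝ))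
    (ν : Bool → ∀ j : ℕ, Measure (Fin (m j) → Bool))
    (P : Measure Ω)
    (J : List ℕ → Ω → Set (EuclideanSpace ℝ (Fin d)))
    (X : List ℕ → Ω → Bool) : Prop where
  hd : 1 ≤ d
  hm : ∀ j, 2 ≤ m j
  hβl : 0 < βl
  hβlh : βl ≤ βh
  hβh : βh < 1
  hμ : ∀ j, IsProbabilityMeasure (μ j)
  hμsupp : ∀ j, μ j {ℓ | ∀ k, ℓ k ∈ Icc βl βh} = 1
  hν : ∀ t j, IsProbabilityMeasure (ν t j)
  hP : IsProbabilityMeasure P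
  hJcompact : ∀ u, TreeValid m u → ∀ ω, IsCompact (J u ω)
  hJdiam : ∀ u, TreeValid m u → ∀ ω, 0 < diam (J u ω)
  hAsub : ∀ u, TreeValid m u → ∀ ω, ∀ k, k < m u.length → J (u ++ [k]) ω ⊆ J u ω
  hAdisj : ∀ u, TreeValid m u → ∀ ω, ∀ k l, k < m u.length → l < m u.length → k ≠ l →
      interior (J (u ++ [k]) ω) ∩ interior (J (u ++ [l]) ω) = ∅
  hB : ∃ κ : ℝ, 0 < κ ∧ ∀ u, TreeValid m u → ∀ ω,
      ENNReal.ofReal (κ * diam (J u ω) ^ d) ≤ volume (interior (J u ω))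
  hLmeas : ∀ v : List ℕ, Measurable (ratioL J v)
  hXmeas : ∀ v : List ℕ, Measurable (X v)
  hCindep : iIndepFun
      (fun u : {u : List ℕ // TreeValid m u} => fun ω => fun k : Fin (m u.1.length) =>
        ratioL J (u.1 ++ [(k : ℕ)]) ω) P
  hClaw : ∀ u : {u : List ℕ // TreeValid m u},
      Measure.map (fun ω => fun k : Fin (m u.1.length) => ratioL J (u.1 ++ [(k : ℕ)]) ω) P
        = μ u.1.length
  hLXindep : Indep
      (⨆ v ∈ {v : List ℕ | TreeValid m v ∧ v ≠ []},
        MeasurableSpace.comap (ratioL J v) inferInstance)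
      (⨆ v ∈ {v : List ℕ | TreeValid m v}, MeasurableSpace.comap (X v) ⊤) P
  hMarkov : ∀ u, TreeValid m u → ∀ A : Set (Fin (m u.length) → Bool), MeasurableSet A →
      (P[(Set.indicator {ω | (fun k : Fin (m u.length) => X (u ++ [(k : ℕ)]) ω) ∈ A}
          fun _ => (1 : ℝ)) | pastSigma m X u]) =ᵐ[P] fun ω => (ν (X u ω) u.length A).toReal

/-- Number of vertices of generation `j` in state `1`, i.e. `#S_j`. -/
def Scount (m : ℕ → ℕ) (X : List ℕ → Ω → Bool) (j : ℕ) (ω : Ω) : ℕ :=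
  ((treeWords m j).filter fun u => X u ω = true).card

/-- Generating function `Φ_j` of `#S_j`. -/
def PhiFn (P : Measure Ω) (m : ℕ → ℕ) (X : List ℕ → Ω → Bool) (j : ℕ) (z : ℝ) : ℝ :=
  ∫ ω, z ^ Scount m X j ω ∂P

/-- Generating function `φ_{t,j}`. -/
def phiFn (m : ℕ → ℕ) (ν : Bool → ∀ j : ℕ, Measure (Fin (m j) → Bool)) (t : Bool) (j : ℕ)
    (z : ℝ) : ℝ :=
  ∫ x, z ^ (Finset.univ.filter fun k : Fin (m j) => x k = true).card ∂ν t j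

/-- The composition `φ_{1,j} ∘ … ∘ φ_{1,j+n}`. -/
def phiComp (m : ℕ → ℕ) (ν : Bool → ∀ j : ℕ, Measure (Fin (m j) → Bool)) :
    ℕ → ℕ → ℝ → ℝ
  | j, 0, z => phiFn m ν true j z
  | j, n + 1, z => phiFn m ν true j (phiComp m ν (j + 1) n z)

/-- The extinction probability `f_j = lim ↑ φ_{1,j} ∘ … ∘ φ_{1,j+n}(0)`. -/
def fExt (m : ℕ → ℕ) (ν : Bool → ∀ j : ℕ, Measure (Fin (m j) → Bool)) (j : ℕ) : ℝ :=
  ⨆ n : ℕ, phiComp m ν j n 0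

/-- `φ'_{1,n}(1)` as an extended nonnegative real. -/
def Dcoef (m : ℕ → ℕ) (ν : Bool → ∀ j : ℕ, Measure (Fin (m j) → Bool)) (n : ℕ) : ℝ≥0∞ :=
  ENNReal.ofReal (deriv (phiFn m ν true n) 1)

/-- The quantity `σ̲_j`. -/
def sigmaLow (m : ℕ → ℕ) (ν : Bool → ∀ j : ℕ, Measure (Fin (m j) → Bool)) (j : ℕ) : ℝ≥0∞ :=
  max 1
    ((∑' n : ℕ,
        ENNReal.ofReal (deriv (phiFn m ν true (j + n)) 1 + phiFn m ν true (j + n) 0 - 1) /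
          (Dcoef m ν (j + n) * ∏ ℓ ∈ Finset.Icc j (j + n), Dcoef m ν ℓ)) +
      limsup (fun n : ℕ => (∏ ℓ ∈ Finset.Icc j n, Dcoef m ν ℓ)⁻¹) atTop)

/-- The quantity `σ̄_j`. -/
def sigmaHigh (m : ℕ → ℕ) (ν : Bool → ∀ j : ℕ, Measure (Fin (m j) → Bool)) (j : ℕ) : ℝ≥0∞ :=
  (∑' n : ℕ,
      ENNReal.ofReal (deriv (deriv (phiFn m ν true (j + n))) 1) /
        (Dcoef m ν (j + n) * ∏ ℓ ∈ Finset.Icc j (j + n), Dcoef m ν ℓ)) +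
    liminf (fun n : ℕ => (∏ ℓ ∈ Finset.Icc j n, Dcoef m ν ℓ)⁻¹) atTop

/-! ### Auxiliary lemmas: words and the tree -/

section TreeLemmas

variable {m : ℕ → ℕ} {X : List ℕ → Ω → Bool}

lemma treeValid_iff {u : List ℕ} : TreeValid m u ↔ ∀ i (h : i < u.length), u[i] < m i := by
  simp [TreeValid]

lemma TreeValid.of_prefix {u w : List ℕ} (h : TreeValid m w) (hp : u <+: w) :
    TreeValid m u := by
  intro i hi
  have := h i (lt_of_lt_of_le hi hp.length_le)
  simpa [List.get_eq_getElem, hp.getElem hi] using this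

lemma treeValid_append {u : List ℕ} (h : TreeValid m u) {k : ℕ} (hk : k < m u.length) :
    TreeValid m (u ++ [k]) := by
  intro i hi
  simp only [List.length_append, List.length_singleton] at hi
  rcases lt_or_eq_of_le (Nat.lt_succ_iff.mp hi) with hi' | hi'
  · simpa [List.get_eq_getElem, List.getElem_append_left hi'] using h i hi'
  · subst hi'
    simpa [List.get_eq_getElem, List.getElem_concat_length] using hk

lemma treeValid_append_last {u : List ℕ} {k : ℕ} (h : TreeValid m (u ++ [k])) :
    k < m u.length := by
  have hi : u.length < (u ++ [k]).length := by simp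
  have := h u.length hi
  simpa [List.get_eq_getElem, List.getElem_concat_length] using this

lemma mem_treeWords {j : ℕ} {u : List ℕ} :
    u ∈ treeWords m j ↔ TreeValid m u ∧ u.length = j := by
  induction j generalizing u with
  | zero =>
    simp only [treeWords, Finset.mem_singleton, List.length_eq_zero_iff]
    constructor
    · rintro rfl; exact ⟨fun i hi => by simp at hi, rfl⟩
    · rintro ⟨-, rfl⟩; rfl
  | succ j ih =>
    simp only [treeWords, Finset.mem_biUnion, Finset.mem_image, Finset.mem_range]
    constructor
    · rintro ⟨v, hv, k, hk, rfl⟩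
      rcases ih.mp hv with ⟨hval, hlen⟩
      exact ⟨treeValid_append hval (hlen ▸ hk), by simp [hlen]⟩
    · rintro ⟨hval, hlen⟩
      have hne : u ≠ [] := by intro h; subst h; simp at hlen
      refine ⟨u.dropLast, ih.mpr ⟨hval.of_prefix (List.dropLast_prefix u),
        by simp [List.length_dropLast, hlen]⟩, u.getLast hne, ?_, ?_⟩
      · have h' : TreeValid m (u.dropLast ++ [u.getLast hne]) := by
          rwa [List.dropLast_append_getLast hne]
        have := treeValid_append_last h'
        simpa [List.length_dropLast, hlen] using this
      · exact List.dropLast_append_getLast hne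
    
lemma card_treeWords (m : ℕ → ℕ) (j : ℕ) :
    (treeWords m j).card = ∏ i ∈ Finset.range j, m i := by
  induction j with
  | zero => simp [treeWords]
  | succ j ih =>
    rw [treeWords, Finset.card_biUnion, Finset.prod_range_succ, ← ih]
    · rw [← Finset.sum_const_nat (m := m j)]
      intro u hu
      rw [Finset.card_image_of_injective _ (fun a b hab => by simpa using hab),
        Finset.card_range]
    · intro u hu v hv huv
      simp only [Finset.disjoint_left, Finset.mem_image, Finset.mem_range]
      rintro w ⟨k, hk, rfl⟩ ⟨k', hk', he⟩
      have hlu := (mem_treeWords.mp hu).2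
      have hlv := (mem_treeWords.mp hv).2
      apply huv
      have := List.append_inj he (by omega)
      exact (this.1.symm : u = v) ▸ rfl

end TreeLemmas

/-! ### Auxiliary lemmas: `memTau`, levels and König's lemma -/

section TauLemmas

variable {m : ℕ → ℕ} {X : List ℕ → Ω → Bool} {ω : Ω}

lemma take_eq_of_prefix {u w : List ℕ} (hp : u <+: w) {j : ℕ} (hj : j ≤ u.length) :
    w.take j = u.take j := by
  rcases hp with ⟨t, rfl⟩
  exact (List.take_append_of_le_length hj)

lemma memTau_self {u : List ℕ} (hu : TreeValid m u) :
    memTau m X u u ω ↔ X u ω = true := by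
  constructor
  · rintro ⟨-, -, h⟩
    simpa using h u.length le_rfl le_rfl
  · intro h
    refine ⟨hu, List.prefix_rfl, fun j h1 h2 => ?_⟩
    have : j = u.length := le_antisymm h2 h1
    subst this; simpa using h

lemma memTau_eq_self {u w : List ℕ} (h : memTau m X u w ω) (hl : w.length = u.length) :
    w = u :=
  (List.IsPrefix.eq_of_length h.2.1 hl.symm).symm

lemma memTau_cons {u w : List ℕ} {k : ℕ} (hpre : u ++ [k] <+: w) :
    memTau m X u w ω ↔ (X u ω = true ∧ memTau m X (u ++ [k]) w ω) := by
  have hup : u <+: w := (u.prefix_append [k]).trans hpre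
  have hlen : u.length + 1 ≤ w.length := by simpa using hpre.length_le
  constructor
  · rintro ⟨hw, -, hX⟩
    refine ⟨?_, hw, hpre, fun j h1 h2 => hX j (by simpa using le_trans (by simp) h1) h2⟩
    have := hX u.length le_rfl (by omega)
    rwa [take_eq_of_prefix hup le_rfl, List.take_length] at this
  · rintro ⟨hXu, hw, -, hX⟩
    refine ⟨hw, hup, fun j h1 h2 => ?_⟩
    rcases eq_or_lt_of_le h1 with rfl | hlt
    · rwa [take_eq_of_prefix hup le_rfl, List.take_length]
    · exact hX j (by simpa using hlt) h2

lemma memTau_trans {u v w : List ℕ} (h1 : memTau m X u v ω) (h2 : memTau m X v w ω) :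
    memTau m X u w ω := by
  refine ⟨h2.1, h1.2.1.trans h2.2.1, fun j hj1 hj2 => ?_⟩
  rcases le_or_gt j v.length with hle | hlt
  · rw [take_eq_of_prefix h2.2.1 hle]
    exact h1.2.2 j hj1 hle
  · exact h2.2.2 j hlt.le hj2

lemma memTau_take {u w : List ℕ} (h : memTau m X u w ω) {j : ℕ} (hj : u.length ≤ j) :
    memTau m X u (w.take j) ω := by
  rcases le_or_gt w.length j with hle | hlt
  · rwa [List.take_of_length_le hle]
  refine ⟨h.1.of_prefix (w.take_prefix j), ?_, fun i hi1 hi2 => ?_⟩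
  · have h0 : u = w.take u.length := List.prefix_iff_eq_take.mp h.2.1
    have h1 : (w.take j).take u.length = w.take u.length := by
      rw [List.take_take, inf_eq_left.mpr hj]
    rw [h0, ← h1]
    exact List.take_prefix _ _
  · rw [List.take_take]
    have hi2' : i ≤ j := by
      have : (w.take j).length = min j w.length := List.length_take
      omega
    rw [inf_eq_left.mpr hi2']
    exact h.2.2 i hi1 (le_trans hi2' hlt.le)

/-- The event that generation `u.length + n` of `τ_u` is empty. -/
def Aset (m : ℕ → ℕ) (X : List ℕ → Ω → Bool) (u : List ℕ) (n : ℕ) : Set Ω :=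
  {ω | ¬ ∃ w : List ℕ, w.length = u.length + n ∧ memTau m X u w ω}

lemma exists_level_anti {u : List ℕ} :
    ∀ {a b : ℕ}, a ≤ b → (∃ w, w.length = u.length + b ∧ memTau m X u w ω) →
      ∃ w, w.length = u.length + a ∧ memTau m X u w ω := by
  intro a b hab
  induction b with
  | zero => simpa [Nat.le_zero.mp hab] using id
  | succ b ih =>
    rcases eq_or_lt_of_le hab with rfl | hlt
    · exact id
    · rintro ⟨w, hwl, hw⟩
      refine ih (by omega) ⟨w.take (u.length + b), ?_, memTau_take hw (by omega)⟩
      rw [List.length_take, hwl]; omega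

lemma exists_child_prefix {u w : List ℕ} (hp : u <+: w) (hl : u.length < w.length) :
    ∃ k, u ++ [k] <+: w := by
  rcases hp with ⟨t, rfl⟩
  match t with
  | [] => simp at hl
  | k :: t' => exact ⟨k, t', by simp⟩

/-- Decomposition of a level of `τ_u` through the children of `u`. -/
lemma aset_succ_subset {u : List ℕ} (hu : TreeValid m u) {n : ℕ} {ω : Ω}
    (hω : ω ∈ Aset m X u (n + 1)) (hXu : X u ω = true) :
    (∀ k : Fin (m u.length), X (u ++ [(k : ℕ)]) ω = false) ∨
      ∃ k : Fin (m u.length), X (u ++ [(k : ℕ)]) ω = true ∧ ω ∈ Aset m X (u ++ [(k : ℕ)]) n := by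
  by_cases hall : ∀ k : Fin (m u.length), X (u ++ [(k : ℕ)]) ω = false
  · exact Or.inl hall
  push_neg at hall
  rcases hall with ⟨k, hk⟩
  replace hk : X (u ++ [(k : ℕ)]) ω = true := by
    simpa using hk
  refine Or.inr ⟨k, hk, fun hcon => ?_⟩
  rcases hcon with ⟨w, hwl, hw⟩
  exact hω ⟨w, by simp only [List.length_append, List.length_singleton] at hwl ⊢; omega,
    (memTau_cons hw.2.1).mpr ⟨hXu, hw⟩⟩

end TauLemmas

/-! ### König's lemma and nonemptiness of `K_u` -/

section Koenig

variable {m : ℕ → ℕ} {X : List ℕ → Ω → Bool} {ω : Ω}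

lemma prefixWord_length (ζ : ℕ → ℕ) (j : ℕ) : (prefixWord ζ j).length = j :=
  List.length_ofFn

lemma prefixWord_getElem (ζ : ℕ → ℕ) {j i : ℕ} (h : i < (prefixWord ζ j).length) :
    (prefixWord ζ j)[i] = ζ i :=
  List.getElem_ofFn _

lemma prefixWord_succ (ζ : ℕ → ℕ) (j : ℕ) :
    prefixWord ζ (j + 1) = prefixWord ζ j ++ [ζ j] := by
  apply List.ext_getElem (by simp [prefixWord_length])
  intro i h1 h2
  rw [prefixWord_getElem]
  rcases lt_or_eq_of_le (Nat.lt_succ_iff.mp (by simpa [prefixWord_length] using h1)) with h | h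
  · rw [List.getElem_append_left (by simpa [prefixWord_length] using h)]
    exact (prefixWord_getElem ζ _).symm
  · subst h
    rw [List.getElem_concat_length (by simp [prefixWord_length])]

lemma prefixWord_prefix (ζ : ℕ → ℕ) {a b : ℕ} (hab : a ≤ b) :
    prefixWord ζ a <+: prefixWord ζ b := by
  induction b with
  | zero => simpa [Nat.le_zero.mp hab] using List.prefix_rfl
  | succ b ih =>
    rcases eq_or_lt_of_le hab with rfl | h
    · exact List.prefix_rfl
    · rw [prefixWord_succ]
      exact (ih (by omega)).trans (List.prefix_append _ _)

/-- König's lemma for the tree `τ_u`. -/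
lemma koenig {u : List ℕ} (hu : TreeValid m u) (hXu : X u ω = true)
    (hlev : ∀ n, ∃ w, w.length = u.length + n ∧ memTau m X u w ω) :
    ∃ ζ : ℕ → ℕ, (∀ j, u.length ≤ j → memTau m X u (prefixWord ζ j) ω) ∧
      prefixWord ζ u.length = u := by
  classical
  set Good : List ℕ → Prop := fun v =>
    memTau m X u v ω ∧ ∀ n, ∃ w, w.length = v.length + n ∧ memTau m X v w ω with hGood
  have hGu : Good u := ⟨(memTau_self hu).mpr hXu, hlev⟩
  -- every good vertex has a good child
  have key : ∀ v, Good v → ∃ k, Good (v ++ [k]) := by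
    rintro v ⟨hmem, hlv⟩
    by_contra hcon
    push_neg at hcon
    -- for each child, some level of its subtree is empty
    have hk : ∀ k : ℕ, ∃ nk, ¬ ∃ w, w.length = (v ++ [k]).length + nk ∧
        memTau m X (v ++ [k]) w ω := by
      intro k
      by_cases hself : memTau m X (v ++ [k]) (v ++ [k]) ω
      · -- then `memTau u (v++[k])` holds, so the levels condition must fail
        have hmemvk : memTau m X v (v ++ [k]) ω := by
          refine ⟨hself.1, List.prefix_append _ _, fun j h1 h2 => ?_⟩
          rcases eq_or_lt_of_le h1 with rfl | hlt
          · rw [take_eq_of_prefix (List.prefix_append v ([k])) le_rfl, List.take_length]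
            have := hmem.2.2 v.length hmem.2.1.length_le le_rfl
            rwa [List.take_length] at this
          · have h2' : j = v.length + 1 := by
              simp only [List.length_append, List.length_singleton] at h2; omega
            subst h2'
            have := hself.2.2 (v.length + 1) (by simp) (by simp)
            simpa using this
        have hA : memTau m X u (v ++ [k]) ω := memTau_trans hmem hmemvk
        have hnotB : ¬ ∀ n, ∃ w, w.length = (v ++ [k]).length + n ∧
            memTau m X (v ++ [k]) w ω := fun hB => hcon k ⟨hA, hB⟩
        rcases not_forall.mp hnotB with ⟨n, hn⟩
        exact ⟨n, hn⟩
      · refine ⟨0, ?_⟩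
        rintro ⟨w, hwl, hw⟩
        exact hself (by rwa [memTau_eq_self hw (by omega)] at hw)
    choose nk hnk using hk
    set N := (Finset.range (m v.length)).sup nk with hN
    rcases hlv (N + 1) with ⟨w, hwl, hw⟩
    rcases exists_child_prefix hw.2.1 (by omega) with ⟨k, hpre⟩
    have hwk : memTau m X (v ++ [k]) w ω := ((memTau_cons hpre).mp hw).2
    have hkm : k < m v.length := by
      have : TreeValid m (v ++ [k]) := hw.1.of_prefix hpre
      exact treeValid_append_last this
    have hle : nk k ≤ N := Finset.le_sup (Finset.mem_range.mpr hkm)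
    apply hnk k
    apply exists_level_anti (le_trans hle (Nat.le_refl N))
      ⟨w, by simp only [List.length_append, List.length_singleton]; omega, hwk⟩
  choose Kc hKc using key
  -- build the branch
  let F : ℕ → {v : List ℕ // Good v} := fun n =>
    Nat.rec ⟨u, hGu⟩ (fun _ p => ⟨p.1 ++ [Kc p.1 p.2], hKc p.1 p.2⟩) n
  have hFsucc : ∀ n, (F (n + 1)).1 = (F n).1 ++ [Kc (F n).1 (F n).2] := fun n => rfl
  have hFlen : ∀ n, (F n).1.length = u.length + n := by
    intro n
    induction n with
    | zero => rfl
    | succ n ih =>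
      rw [hFsucc]
      simp only [List.length_append, List.length_singleton, ih]
      omega
  have hFpre : ∀ a b, a ≤ b → (F a).1 <+: (F b).1 := by
    intro a b hab
    induction b with
    | zero => simpa [Nat.le_zero.mp hab] using List.prefix_rfl
    | succ b ih =>
      rcases eq_or_lt_of_le hab with rfl | h
      · exact List.prefix_rfl
      · rw [hFsucc]
        exact (ih (by omega)).trans (List.prefix_append _ _)
  have getD_pre : ∀ (p q : List ℕ), p <+: q → ∀ i, i < p.length →
      q.getD i 0 = p.getD i 0 := by
    intro p q hpq i hi
    rw [List.getD_eq_getElem _ _ (lt_of_lt_of_le hi hpq.length_le),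
      List.getD_eq_getElem _ _ hi, hpq.getElem hi]
  refine ⟨fun i => (F (i + 1)).1.getD i 0, ?_⟩
  have hPF : ∀ n, prefixWord (fun i => (F (i + 1)).1.getD i 0) (u.length + n) = (F n).1 := by
    intro n
    induction n with
    | zero =>
      apply List.ext_getElem (by simp [prefixWord_length, hFlen])
      intro i h1 h2
      rw [prefixWord_getElem]
      have hiu : i < u.length := by
        have := hFlen 0
        omega
      show (F (i + 1)).1.getD i 0 = _
      rw [getD_pre (F 0).1 (F (i + 1)).1 (hFpre 0 (i + 1) (by omega)) i
        (by have := hFlen 0; omega)]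
      exact List.getD_eq_getElem _ _ _
    | succ n ih =>
      rw [Nat.add_succ, prefixWord_succ, ih, hFsucc]
      congr 1
      show [(F (u.length + n + 1)).1.getD (u.length + n) 0] = _
      congr 1
      rw [getD_pre (F (n + 1)).1 (F (u.length + n + 1)).1
        (hFpre (n + 1) (u.length + n + 1) (by omega))
        (u.length + n) (by have := hFlen (n + 1); omega)]
      rw [List.getD_eq_getElem _ _ (by have := hFlen (n + 1); omega)]
      rw [List.getElem_of_eq (hFsucc n) (by have := hFlen (n + 1); omega)]
      exact List.getElem_concat_length (by have := hFlen n; omega) _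
  constructor
  · intro j hj
    have hj' : j = u.length + (j - u.length) := by omega
    rw [hj', hPF]
    exact (F (j - u.length)).2.1
  · exact hPF 0
end Koenig

/-! ### Geometry: survival of `τ_u` makes `Θ` nonempty -/

section Geometry

variable {m : ℕ → ℕ} {X : List ℕ → Ω → Bool}
  {J : List ℕ → Ω → Set (EuclideanSpace ℝ (Fin d))}

/-- The event that all vertices of generation `j` are in state 0. -/
def Gset (m : ℕ → ℕ) (X : List ℕ → Ω → Bool) (j : ℕ) : Set Ω :=
  {ω | ∀ u ∈ treeWords m j, X u ω = false}

/-- The event that all generations `jstar, …, jstar + N` are entirely in state 0. -/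
def Dset (m : ℕ → ℕ) (X : List ℕ → Ω → Bool) (jstar N : ℕ) : Set Ω :=
  ⋂ n ∈ Finset.range (N + 1), Gset m X (jstar + n)

/-- The event that all generations `≥ jstar` are entirely in state 0. -/
def Eset (m : ℕ → ℕ) (X : List ℕ → Ω → Bool) (jstar : ℕ) : Set Ω :=
  ⋂ n : ℕ, Gset m X (jstar + n)

lemma iInter_Dset (m : ℕ → ℕ) (X : List ℕ → Ω → Bool) (jstar : ℕ) :
    ⋂ N : ℕ, Dset m X jstar N = Eset m X jstar := by
  ext ω
  simp only [Eset, Dset, Set.mem_iInter, Finset.mem_range]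
  exact ⟨fun h n => h n n (by omega), fun h N n _ => h n⟩

lemma theta_nonempty_of_surviving
    (hJc : ∀ u, TreeValid m u → ∀ ω, IsCompact (J u ω))
    (hJd : ∀ u, TreeValid m u → ∀ ω, 0 < diam (J u ω))
    (hAsub : ∀ u, TreeValid m u → ∀ ω, ∀ k, k < m u.length → J (u ++ [k]) ω ⊆ J u ω)
    {u : List ℕ} {ω : Ω} (hu : TreeValid m u) (hXu : X u ω = true)
    (hlev : ∀ n, ω ∉ Aset m X u n) :
    (ThetaSet m J X ω).Nonempty := by
  have hlev' : ∀ n, ∃ w, w.length = u.length + n ∧ memTau m X u w ω := by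
    intro n
    have := hlev n
    simpa [Aset] using this
  rcases koenig hu hXu hlev' with ⟨ζ, hmem, hpu⟩
  have hTV : ∀ j, TreeValid m (prefixWord ζ j) := by
    intro j
    rcases le_or_gt u.length j with hj | hj
    · exact (hmem j hj).1
    · exact hu.of_prefix (hpu ▸ prefixWord_prefix ζ hj.le)
  have hchain : ∀ j, J (prefixWord ζ (j + 1)) ω ⊆ J (prefixWord ζ j) ω := by
    intro j
    have hk : ζ j < m j := by
      have := hTV (j + 1)
      rw [prefixWord_succ] at this
      have := treeValid_append_last this
      rwa [prefixWord_length] at this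
    have := hAsub (prefixWord ζ j) (hTV j) ω (ζ j) (by rwa [prefixWord_length])
    rwa [← prefixWord_succ] at this
  have hne : ∀ j, (J (prefixWord ζ j) ω).Nonempty := by
    intro j
    rw [Set.nonempty_iff_ne_empty]
    intro hcon
    have := hJd _ (hTV j) ω
    rw [hcon] at this
    simp [Metric.diam_empty] at this
  have hclosed : ∀ j, IsClosed (J (prefixWord ζ j) ω) :=
    fun j => (hJc _ (hTV j) ω).isClosed
  have hcap : (⋂ j, J (prefixWord ζ j) ω).Nonempty :=
    IsCompact.nonempty_iInter_of_sequence_nonempty_isCompact_isClosed _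
      hchain hne (hJc _ (hTV 0) ω) hclosed
  rcases hcap with ⟨x, hx⟩
  refine ⟨x, ?_⟩
  refine Set.mem_biUnion (show u ∈ {u : List ℕ | TreeValid m u} from hu) ?_
  exact ⟨ζ, hmem, fun j => Set.mem_iInter.mp hx j⟩

lemma eset_subset_theta_empty (jstar : ℕ) :
    Eset m X jstar ⊆ {ω | ThetaSet m J X ω = ∅} := by
  intro ω hω
  rw [Set.mem_setOf_eq, Set.eq_empty_iff_forall_notMem]
  intro x hx
  rcases Set.mem_iUnion₂.mp hx with ⟨u, hu, hxu⟩
  rcases hxu with ⟨ζ, hmem, -⟩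
  set j := jstar + u.length with hj
  have hmemj := hmem j (by omega)
  have hw : prefixWord ζ j ∈ treeWords m j :=
    mem_treeWords.mpr ⟨hmemj.1, prefixWord_length ζ j⟩
  have hX1 : X (prefixWord ζ j) ω = true := by
    have := hmemj.2.2 j (by omega) (by rw [prefixWord_length])
    rwa [List.take_of_length_le (by rw [prefixWord_length])] at this
  have hX0 : X (prefixWord ζ j) ω = false := by
    have := Set.mem_iInter.mp hω u.length
    exact this _ hw
  rw [hX1] at hX0
  simp at hX0

lemma theta_empty_subset
    (hJc : ∀ u, TreeValid m u → ∀ ω, IsCompact (J u ω))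
    (hJd : ∀ u, TreeValid m u → ∀ ω, 0 < diam (J u ω))
    (hAsub : ∀ u, TreeValid m u → ∀ ω, ∀ k, k < m u.length → J (u ++ [k]) ω ⊆ J u ω)
    (jstar : ℕ) :
    {ω | ThetaSet m J X ω = ∅} ⊆ Eset m X jstar ∪
      ⋃ (u : List ℕ) (n : ℕ),
        {ω | TreeValid m u ∧ jstar ≤ u.length ∧ X u ω = true} ∩ Aset m X u n := by
  intro ω hω
  by_cases hE : ω ∈ Eset m X jstar
  · exact Or.inl hE
  right
  simp only [Eset, Set.mem_iInter, Gset, Set.mem_setOf_eq] at hE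
  push_neg at hE
  rcases hE with ⟨n0, u, hu, hXu⟩
  rcases mem_treeWords.mp hu with ⟨huv, hul⟩
  replace hXu : X u ω = true := by simpa using hXu
  refine Set.mem_iUnion.mpr ⟨u, ?_⟩
  by_contra hcon
  simp only [Set.mem_iUnion, not_exists] at hcon
  have hlev : ∀ n, ω ∉ Aset m X u n := by
    intro n hn
    exact hcon n ⟨⟨huv, by omega, hXu⟩, hn⟩
  have hne := theta_nonempty_of_surviving hJc hJd hAsub huv hXu hlev
  rw [Set.mem_setOf_eq] at hω
  rw [hω] at hne
  exact Set.not_nonempty_empty hne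

end Geometry

/-! ### The σ-algebras `pastSigma` and the peeling lemma -/

section Peel

variable {m : ℕ → ℕ} {X : List ℕ → Ω → Bool}

lemma pastSigma_le (hX : ∀ v : List ℕ, Measurable (X v)) (u : List ℕ) :
    pastSigma m X u ≤ ‹MeasurableSpace Ω› := by
  refine iSup_le fun v => iSup_le fun hv => ?_
  rintro s ⟨A, -, rfl⟩
  exact hX v (A.toFinite.measurableSet)

lemma measurableSet_X_pastSigma (u : List ℕ) {v : List ℕ} (hv : TreeValid m v)
    (hnd : ¬(u <+: v ∧ u ≠ v)) (b : Bool) :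
    MeasurableSet[pastSigma m X u] {ω | X v ω = b} := by
  have hle : MeasurableSpace.comap (X v) ⊤ ≤ pastSigma m X u := by
    refine le_trans ?_ (le_iSup _ v)
    exact le_iSup (fun _ : v ∈ {v : List ℕ | TreeValid m v ∧ ¬(u <+: v ∧ u ≠ v)} =>
      MeasurableSpace.comap (X v) ⊤) ⟨hv, hnd⟩
  exact hle _ ⟨{b}, trivial, rfl⟩

lemma pastSigma_mono {u u' : List ℕ} (hp : u <+: u') :
    pastSigma m X u ≤ pastSigma m X u' := by
  refine iSup_le fun v => iSup_le fun hv => ?_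
  rcases hv with ⟨hv1, hv2⟩
  have hv2' : ¬(u' <+: v ∧ u' ≠ v) := by
    rintro ⟨hpv, hne⟩
    refine hv2 ⟨hp.trans hpv, ?_⟩
    rintro rfl
    exact hne (hpv.eq_of_length (le_antisymm hpv.length_le hp.length_le))
  refine le_trans ?_ (le_iSup _ v)
  exact le_iSup (fun _ : v ∈ {v : List ℕ | TreeValid m v ∧ ¬(u' <+: v ∧ u' ≠ v)} =>
    MeasurableSpace.comap (X v) ⊤) ⟨hv1, hv2'⟩

variable {d : ℕ} {βl βh : ℝ} {μ : ∀ j : ℕ, Measure (Fin (m j) → ℝ)}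
  {ν : Bool → ∀ j : ℕ, Measure (Fin (m j) → Bool)} {P : Measure Ω}
  {J : List ℕ → Ω → Set (EuclideanSpace ℝ (Fin d))}

/-- The fundamental peeling identity derived from the Markov hypothesis. -/
lemma peel (h : Hyp d m βl βh μ ν P J X) {u : List ℕ} (hu : TreeValid m u)
    {t : Bool} {B : Set Ω} (hB : MeasurableSet[pastSigma m X u] B)
    (hBt : B ⊆ {ω | X u ω = t}) (A : Set (Fin (m u.length) → Bool)) :
    P (B ∩ {ω | (fun k : Fin (m u.length) => X (u ++ [(k : ℕ)]) ω) ∈ A})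
      = ν t u.length A * P B := by
  haveI := h.hP
  haveI := h.hν t u.length
  have hle : pastSigma m X u ≤ ‹MeasurableSpace Ω› := pastSigma_le h.hXmeas u
  have hBm : MeasurableSet B := hle _ hB
  set S : Set Ω := {ω | (fun k : Fin (m u.length) => X (u ++ [(k : ℕ)]) ω) ∈ A} with hS
  have hSmeas : MeasurableSet S := by
    have hvec : Measurable fun ω => fun k : Fin (m u.length) => X (u ++ [(k : ℕ)]) ω :=
      measurable_pi_iff.mpr fun k => h.hXmeas _
    exact hvec (A.toFinite.measurableSet)
  have hg : Integrable (Set.indicator S fun _ => (1 : ℝ)) P :=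
    (integrable_const (1 : ℝ)).indicator hSmeas
  have hcond := h.hMarkov u hu A (A.toFinite.measurableSet)
  have e0 : ∫ ω in B, Set.indicator S (fun _ => (1 : ℝ)) ω ∂P
      = ∫ ω in B, (P[Set.indicator S fun _ => (1 : ℝ)|pastSigma m X u]) ω ∂P :=
    (setIntegral_condExp hle hg hB).symm
  have e1 : ∫ ω in B, Set.indicator S (fun _ => (1 : ℝ)) ω ∂P = (P (B ∩ S)).toReal := by
    rw [setIntegral_indicator hSmeas, setIntegral_const, smul_eq_mul, mul_one]
    rfl
  have e2 : ∫ ω in B, (P[Set.indicator S fun _ => (1 : ℝ)|pastSigma m X u]) ω ∂P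
      = (ν t u.length A).toReal * (P B).toReal := by
    rw [setIntegral_congr_ae hBm (hcond.mono fun ω hω _ => hω)]
    rw [setIntegral_congr_fun hBm (g := fun _ => (ν t u.length A).toReal)
      (fun ω hω => by rw [Set.mem_setOf_eq.mp (hBt hω)])]
    rw [setIntegral_const, smul_eq_mul, mul_comm]
    rfl
  have e3 : (P (B ∩ S)).toReal = ((ν t u.length A) * P B).toReal := by
    rw [ENNReal.toReal_mul, ← e1, e0, e2]
  have h1 : P (B ∩ S) ≠ ⊤ := measure_ne_top _ _
  have h2 : ν t u.length A * P B ≠ ⊤ :=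
    ENNReal.mul_ne_top (measure_ne_top _ _) (measure_ne_top _ _)
  exact (ENNReal.toReal_eq_toReal_iff' h1 h2).mp e3

end Peel

/-! ### Generating functions: bounds and vanishing -/

section GenFn

variable {m : ℕ → ℕ} {ν : Bool → ∀ j : ℕ, Measure (Fin (m j) → Bool)}

lemma phiFn_nonneg (hν : ∀ t j, IsProbabilityMeasure (ν t j)) (t : Bool) (j : ℕ) {z : ℝ}
    (hz : 0 ≤ z) : 0 ≤ phiFn m ν t j z :=
  integral_nonneg fun x => pow_nonneg hz _

lemma phiFn_le_one (hν : ∀ t j, IsProbabilityMeasure (ν t j)) (t : Bool) (j : ℕ) {z : ℝ}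
    (hz0 : 0 ≤ z) (hz1 : z ≤ 1) : phiFn m ν t j z ≤ 1 := by
  haveI := hν t j
  calc ∫ x, z ^ (Finset.univ.filter fun k : Fin (m j) => x k = true).card ∂ν t j
      ≤ ∫ _, (1 : ℝ) ∂ν t j := by
        refine integral_mono (.of_finite) (integrable_const _) fun x => ?_
        exact pow_le_one₀ hz0 hz1
    _ = 1 := by simp

lemma pow_le_phiFn_true (hν : ∀ t j, IsProbabilityMeasure (ν t j)) (j : ℕ) {z : ℝ}
    (hz0 : 0 ≤ z) (hz1 : z ≤ 1) : z ^ m j ≤ phiFn m ν true j z := by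
  haveI := hν true j
  calc z ^ m j = ∫ _, z ^ m j ∂ν true j := by simp
    _ ≤ ∫ x, z ^ (Finset.univ.filter fun k : Fin (m j) => x k = true).card ∂ν true j := by
        refine integral_mono (integrable_const _) (.of_finite) fun x => ?_
        refine pow_le_pow_of_le_one hz0 hz1 ?_
        calc (Finset.univ.filter fun k : Fin (m j) => x k = true).card
            ≤ Finset.univ.card := Finset.card_filter_le _ _
          _ = m j := by simp

lemma phiComp_nonneg (hν : ∀ t j, IsProbabilityMeasure (ν t j)) :
    ∀ n j, 0 ≤ phiComp m ν j n 0 := by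
  intro n
  induction n with
  | zero => exact fun j => phiFn_nonneg hν true j le_rfl
  | succ n ih =>
    intro j
    exact phiFn_nonneg hν true j (ih (j + 1))

lemma phiComp_le_one (hν : ∀ t j, IsProbabilityMeasure (ν t j)) :
    ∀ n j, phiComp m ν j n 0 ≤ 1 := by
  intro n
  induction n with
  | zero => exact fun j => phiFn_le_one hν true j le_rfl zero_le_one
  | succ n ih =>
    intro j
    exact phiFn_le_one hν true j (phiComp_nonneg hν n (j + 1)) (ih (j + 1))

lemma phiComp_eq_zero_of_fExt (hm : ∀ j, 2 ≤ m j)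
    (hν : ∀ t j, IsProbabilityMeasure (ν t j)) {jstar : ℕ}
    (hjstar : fExt m ν jstar = 0) :
    ∀ j, jstar ≤ j → ∀ n, phiComp m ν j n 0 = 0 := by
  -- from `fExt j = 0` all the approximants vanish
  have hterm : ∀ j, fExt m ν j = 0 → ∀ n, phiComp m ν j n 0 = 0 := by
    intro j hj n
    have hbdd : BddAbove (Set.range fun n => phiComp m ν j n 0) :=
      ⟨1, by rintro x ⟨n, rfl⟩; exact phiComp_le_one hν n j⟩
    have hle : phiComp m ν j n 0 ≤ fExt m ν j := le_ciSup hbdd n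
    exact le_antisymm (hj ▸ hle) (phiComp_nonneg hν n j)
  have hstep : ∀ j, fExt m ν j = 0 → fExt m ν (j + 1) = 0 := by
    intro j hj
    have hz : ∀ n, phiComp m ν (j + 1) n 0 = 0 := by
      intro n
      have h1 : phiComp m ν j (n + 1) 0 = 0 := hterm j hj (n + 1)
      have h2 : phiFn m ν true j (phiComp m ν (j + 1) n 0) = 0 := h1
      have h3 := pow_le_phiFn_true hν j (phiComp_nonneg hν n (j + 1))
        (phiComp_le_one hν n (j + 1))
      rw [h2] at h3
      have h4 : phiComp m ν (j + 1) n 0 ^ m j = 0 :=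
        le_antisymm h3 (pow_nonneg (phiComp_nonneg hν n (j + 1)) _)
      exact pow_eq_zero_iff (by have := hm j; omega) |>.mp h4
    have : (fun n => phiComp m ν (j + 1) n 0) = fun _ => (0 : ℝ) := funext hz
    rw [fExt, this, ciSup_const]
  intro j hjj
  induction j, hjj using Nat.le_induction with
  | base => exact hterm jstar hjstar
  | succ j hjj ih =>
    refine hterm (j + 1) (hstep j ?_)
    have hbdd : BddAbove (Set.range fun n => phiComp m ν j n 0) :=
      ⟨1, by rintro x ⟨n, rfl⟩; exact phiComp_le_one hν n j⟩
    refine le_antisymm ?_ ?_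
    · rw [fExt]
      exact ciSup_le fun n => le_of_eq (ih n)
    · rw [fExt]
      exact le_ciSup_of_le hbdd 0 (ge_of_eq (ih 0))

/-- `φ_{t,j}(0)` is the mass that `ν_{t,j}` puts on the all-0 configuration. -/
lemma phiFn_zero_eq (hν : ∀ t j, IsProbabilityMeasure (ν t j)) (t : Bool) (j : ℕ) :
    phiFn m ν t j 0 = (ν t j {x | ∀ k, x k = false}).toReal := by
  haveI := hν t j
  have hpt : ∀ x : Fin (m j) → Bool,
      (0 : ℝ) ^ (Finset.univ.filter fun k : Fin (m j) => x k = true).card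
        = Set.indicator {x : Fin (m j) → Bool | ∀ k, x k = false} 1 x := by
    intro x
    by_cases hx : ∀ k, x k = false
    · have : (Finset.univ.filter fun k : Fin (m j) => x k = true) = ∅ := by
        refine Finset.filter_eq_empty_iff.mpr fun k _ => by simp [hx k]
      rw [this]
      simp [Set.indicator_of_mem, hx]
    · have hx' : x ∉ {x : Fin (m j) → Bool | ∀ k, x k = false} := hx
      rw [Set.indicator_of_notMem hx']
      push_neg at hx
      rcases hx with ⟨k, hk⟩
      have : (Finset.univ.filter fun k : Fin (m j) => x k = true).card ≠ 0 := by
        refine Finset.card_ne_zero_of_mem (a := k) ?_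
        simp only [Finset.mem_filter, Finset.mem_univ, true_and]
        simpa using hk
      rw [zero_pow this]
  rw [phiFn]
  rw [integral_congr_ae (Filter.Eventually.of_forall hpt)]
  exact integral_indicator_one ((Set.toFinite _).measurableSet)

end GenFn

/-! ### Step B: the survival events are null -/

section StepB

variable {m : ℕ → ℕ} {X : List ℕ → Ω → Bool} {d : ℕ} {βl βh : ℝ}
  {μ : ∀ j : ℕ, Measure (Fin (m j) → ℝ)}
  {ν : Bool → ∀ j : ℕ, Measure (Fin (m j) → Bool)} {P : Measure Ω}
  {J : List ℕ → Ω → Set (EuclideanSpace ℝ (Fin d))}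

lemma aset_null (h : Hyp d m βl βh μ ν P J X) {jstar : ℕ}
    (hz : ∀ j, jstar ≤ j → ∀ n, phiComp m ν j n 0 = 0) :
    ∀ n (u : List ℕ), TreeValid m u → jstar ≤ u.length →
      ∀ B : Set Ω, MeasurableSet[pastSigma m X u] B → B ⊆ {ω | X u ω = true} →
        P (B ∩ Aset m X u n) = 0 := by
  intro n
  induction n with
  | zero =>
    intro u hu hul B hB hBt
    have : B ∩ Aset m X u 0 = ∅ := by
      rw [Set.eq_empty_iff_forall_notMem]
      rintro ω ⟨hωB, hωA⟩
      exact hωA ⟨u, by omega, (memTau_self hu).mpr (hBt hωB)⟩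
    rw [this, measure_empty]
  | succ n ih =>
    intro u hu hul B hB hBt
    have hsub : B ∩ Aset m X u (n + 1) ⊆
        (B ∩ {ω | (fun k : Fin (m u.length) => X (u ++ [(k : ℕ)]) ω) ∈
          {x : Fin (m u.length) → Bool | ∀ k, x k = false}}) ∪
        ⋃ k : Fin (m u.length),
          (B ∩ {ω | X (u ++ [(k : ℕ)]) ω = true}) ∩ Aset m X (u ++ [(k : ℕ)]) n := by
      rintro ω ⟨hωB, hωA⟩
      rcases aset_succ_subset hu hωA (hBt hωB) with hall | ⟨k, hk1, hk2⟩
      · exact Or.inl ⟨hωB, hall⟩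
      · exact Or.inr (Set.mem_iUnion.mpr ⟨k, ⟨hωB, hk1⟩, hk2⟩)
    refine measure_mono_null hsub (measure_union_null ?_ (measure_iUnion_null fun k => ?_))
    · rw [peel h hu hB hBt {x : Fin (m u.length) → Bool | ∀ k, x k = false}]
      have hval : (ν true u.length {x | ∀ k, x k = false}).toReal = 0 := by
        rw [← phiFn_zero_eq h.hν true u.length]
        exact hz u.length hul 0
      haveI := h.hν true u.length
      have : ν true u.length {x | ∀ k, x k = false} = 0 := by
        rcases ENNReal.toReal_eq_zero_iff _ |>.mp hval with h0 | h0
        · exact h0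
        · exact absurd h0 (measure_ne_top _ _)
      rw [this, zero_mul]
    · have hk : (k : ℕ) < m u.length := k.isLt
      have hu' : TreeValid m (u ++ [(k : ℕ)]) := treeValid_append hu hk
      have hB' : MeasurableSet[pastSigma m X (u ++ [(k : ℕ)])]
          (B ∩ {ω | X (u ++ [(k : ℕ)]) ω = true}) := by
        refine MeasurableSet.inter (pastSigma_mono (List.prefix_append _ _) _ hB) ?_
        exact measurableSet_X_pastSigma _ hu' (fun hc => hc.2 rfl) true
      exact ih (u ++ [(k : ℕ)]) hu' (by simp; omega) _ hB' Set.inter_subset_right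

lemma nullset (h : Hyp d m βl βh μ ν P J X) {jstar : ℕ}
    (hz : ∀ j, jstar ≤ j → ∀ n, phiComp m ν j n 0 = 0) :
    P (⋃ (u : List ℕ) (n : ℕ),
        {ω | TreeValid m u ∧ jstar ≤ u.length ∧ X u ω = true} ∩ Aset m X u n) = 0 := by
  refine measure_iUnion_null fun u => measure_iUnion_null fun n => ?_
  by_cases hu : TreeValid m u ∧ jstar ≤ u.length
  · have hset : {ω | TreeValid m u ∧ jstar ≤ u.length ∧ X u ω = true}
        = {ω | X u ω = true} := by
      ext ω
      simp [hu.1, hu.2]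
    rw [hset]
    exact aset_null h hz n u hu.1 hu.2 _
      (measurableSet_X_pastSigma _ hu.1 (fun hc => hc.2 rfl) true) fun ω hω => hω
  · have hset : {ω | TreeValid m u ∧ jstar ≤ u.length ∧ X u ω = true} = ∅ := by
      rw [Set.eq_empty_iff_forall_notMem]
      rintro ω ⟨h1, h2, h3⟩
      exact hu ⟨h1, h2⟩
    rw [hset, Set.empty_inter, measure_empty]

end StepB

/-! ### Step A: the probability of `Eset` -/

section StepA

variable {m : ℕ → ℕ} {X : List ℕ → Ω → Bool} {d : ℕ} {βl βh : ℝ}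
  {μ : ∀ j : ℕ, Measure (Fin (m j) → ℝ)}
  {ν : Bool → ∀ j : ℕ, Measure (Fin (m j) → Bool)} {P : Measure Ω}
  {J : List ℕ → Ω → Set (EuclideanSpace ℝ (Fin d))}

/-- The event that all children of `u` are in state 0. -/
def Cset (m : ℕ → ℕ) (X : List ℕ → Ω → Bool) (u : List ℕ) : Set Ω :=
  {ω | (fun k : Fin (m u.length) => X (u ++ [(k : ℕ)]) ω) ∈
    {x : Fin (m u.length) → Bool | ∀ k, x k = false}}

lemma not_strict_desc_of_le {u v : List ℕ} (h : v.length ≤ u.length) :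
    ¬(u <+: v ∧ u ≠ v) := by
  rintro ⟨hp, hne⟩
  exact hne (hp.eq_of_length (le_antisymm hp.length_le h))

lemma not_strict_desc_append {u u' : List ℕ} (hlen : u'.length = u.length)
    (hne : u' ≠ u) (k : ℕ) : ¬(u <+: u' ++ [k] ∧ u ≠ u' ++ [k]) := by
  rintro ⟨hp, -⟩
  apply hne
  have h1 : u = List.take u.length (u' ++ [k]) := List.prefix_iff_eq_take.mp hp
  rw [List.take_append_of_le_length (by omega), ← hlen, List.take_length] at h1
  exact h1.symm

lemma measurableSet_Gset (hX : ∀ v : List ℕ, Measurable (X v)) (j : ℕ) :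
    MeasurableSet (Gset m X j) := by
  have : Gset m X j = ⋂ u ∈ (treeWords m j : Finset (List ℕ)), X u ⁻¹' {false} := by
    ext ω; simp [Gset]
  rw [this]
  exact MeasurableSet.iInter fun u => MeasurableSet.iInter
    fun _ => hX u (Set.toFinite _).measurableSet

lemma measurableSet_Dset (hX : ∀ v : List ℕ, Measurable (X v)) (jstar N : ℕ) :
    MeasurableSet (Dset m X jstar N) :=
  MeasurableSet.iInter fun n => MeasurableSet.iInter
    fun _ => measurableSet_Gset hX _

lemma measurableSet_Gset_pastSigma {u : List ℕ} {j : ℕ} (hj : j ≤ u.length) :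
    MeasurableSet[pastSigma m X u] (Gset m X j) := by
  have : Gset m X j = ⋂ v ∈ (treeWords m j : Finset (List ℕ)), {ω | X v ω = false} := by
    ext ω; simp [Gset]
  rw [this]
  refine MeasurableSet.iInter fun v => MeasurableSet.iInter fun hv => ?_
  have hvm := mem_treeWords.mp hv
  exact measurableSet_X_pastSigma u hvm.1 (not_strict_desc_of_le (by omega)) false

lemma measurableSet_Dset_pastSigma {u : List ℕ} {jstar N : ℕ} (hN : jstar + N ≤ u.length) :
    MeasurableSet[pastSigma m X u] (Dset m X jstar N) :=
  MeasurableSet.iInter fun n => MeasurableSet.iInter fun hn =>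
    measurableSet_Gset_pastSigma (by have := Finset.mem_range.mp hn; omega)

lemma measurableSet_Cset_pastSigma {u u' : List ℕ} (hlen : u'.length = u.length)
    (hne : u' ≠ u) (hu' : TreeValid m u') :
    MeasurableSet[pastSigma m X u] (Cset m X u') := by
  have : Cset m X u' = ⋂ k : Fin (m u'.length), {ω | X (u' ++ [(k : ℕ)]) ω = false} := by
    ext ω; simp [Cset]
  rw [this]
  refine MeasurableSet.iInter fun k => ?_
  exact measurableSet_X_pastSigma u (treeValid_append hu' k.isLt)
    (not_strict_desc_append hlen hne (k : ℕ)) false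

lemma Dset_subset_X_false {jstar N : ℕ} {u : List ℕ} (hu : u ∈ treeWords m (jstar + N)) :
    Dset m X jstar N ⊆ {ω | X u ω = false} := by
  intro ω hω
  have := Set.mem_iInter.mp hω N
  have h2 := Set.mem_iInter.mp this (Finset.self_mem_range_succ N)
  exact h2 u hu

lemma stepA_peel (h : Hyp d m βl βh μ ν P J X) (jstar N : ℕ) (s : Finset (List ℕ))
    (hs : s ⊆ treeWords m (jstar + N)) :
    P (Dset m X jstar N ∩ ⋂ u ∈ (s : Set (List ℕ)), Cset m X u)
      = (ν false (jstar + N) {x | ∀ k, x k = false}) ^ s.card * P (Dset m X jstar N) := by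
  classical
  induction s using Finset.induction_on with
  | empty => simp
  | @insert a s ha ih =>
    have haw : a ∈ treeWords m (jstar + N) := hs (Finset.mem_insert_self a s)
    have hsw : s ⊆ treeWords m (jstar + N) := fun x hx => hs (Finset.mem_insert_of_mem hx)
    rcases mem_treeWords.mp haw with ⟨hav, hal⟩
    have hre : Dset m X jstar N ∩ ⋂ u ∈ (↑(insert a s) : Set (List ℕ)), Cset m X u
        = (Dset m X jstar N ∩ ⋂ u ∈ (s : Set (List ℕ)), Cset m X u) ∩ Cset m X a := by
      rw [Finset.coe_insert, Set.biInter_insert]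
      rw [Set.inter_comm (Cset m X a), ← Set.inter_assoc]
    rw [hre]
    have hBmeas : MeasurableSet[pastSigma m X a]
        (Dset m X jstar N ∩ ⋂ u ∈ (s : Set (List ℕ)), Cset m X u) := by
      refine (measurableSet_Dset_pastSigma (by omega)).inter ?_
      refine MeasurableSet.iInter fun v => MeasurableSet.iInter fun hv => ?_
      rcases mem_treeWords.mp (hsw hv) with ⟨hvv, hvl⟩
      refine measurableSet_Cset_pastSigma (by omega) ?_ hvv
      rintro rfl
      exact ha hv
    have hBsub : Dset m X jstar N ∩ ⋂ u ∈ (s : Set (List ℕ)), Cset m X u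
        ⊆ {ω | X a ω = false} :=
      fun ω hω => Dset_subset_X_false haw hω.1
    have hp := peel h hav hBmeas hBsub {x : Fin (m a.length) → Bool | ∀ k, x k = false}
    rw [show {ω | (fun k : Fin (m a.length) => X (a ++ [(k : ℕ)]) ω) ∈
      {x : Fin (m a.length) → Bool | ∀ k, x k = false}} = Cset m X a from rfl] at hp
    rw [hp, ih hsw, Finset.card_insert_of_notMem ha, pow_succ]
    have hnu : ν false a.length {x | ∀ k, x k = false}
        = ν false (jstar + N) {x | ∀ k, x k = false} := by rw [hal]
    rw [hnu]
    ring

lemma Dset_succ (jstar N : ℕ) :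
    Dset m X jstar (N + 1) = Dset m X jstar N ∩
      ⋂ u ∈ ((treeWords m (jstar + N) : Finset (List ℕ)) : Set (List ℕ)), Cset m X u := by
  have hG : Gset m X (jstar + N + 1)
      = ⋂ u ∈ ((treeWords m (jstar + N) : Finset (List ℕ)) : Set (List ℕ)), Cset m X u := by
    ext ω
    simp only [Gset, Set.mem_iInter, Set.mem_setOf_eq, Finset.mem_coe, Cset]
    constructor
    · intro hω u hu k
      rcases mem_treeWords.mp hu with ⟨huv, hul⟩
      refine hω (u ++ [(k : ℕ)]) (mem_treeWords.mpr ⟨treeValid_append huv k.isLt, ?_⟩)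
      simp [hul]
    · intro hω w hw
      rcases mem_treeWords.mp hw with ⟨hwv, hwl⟩
      have hne : w ≠ [] := by intro hc; subst hc; simp at hwl
      set u := w.dropLast with hu
      have hrw : u ++ [w.getLast hne] = w := List.dropLast_append_getLast hne
      have hum : u ∈ treeWords m (jstar + N) :=
        mem_treeWords.mpr ⟨hwv.of_prefix (List.dropLast_prefix w),
          by simp [hu, List.length_dropLast, hwl]⟩
      have hk : w.getLast hne < m u.length := by
        have : TreeValid m (u ++ [w.getLast hne]) := by rwa [hrw]
        exact treeValid_append_last this
      have := hω u hum ⟨w.getLast hne, hk⟩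
      rwa [hrw] at this
  ext ω
  simp only [Dset, Set.mem_iInter, Set.mem_inter_iff, Finset.mem_range, ← hG]
  constructor
  · intro hω
    exact ⟨fun n hn => hω n (by omega), hω (N + 1) (by omega)⟩
  · rintro ⟨h1, h2⟩ n hn
    rcases Nat.lt_succ_iff_lt_or_eq.mp hn with hn' | hn'
    · exact h1 n hn'
    · subst hn'
      simpa [Nat.add_assoc] using h2

/-- `Φ_j(0)` is the probability that generation `j` is entirely in state 0. -/
lemma PhiFn_zero (P : Measure Ω) (hX : ∀ v : List ℕ, Measurable (X v)) (j : ℕ) :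
    PhiFn P m X j 0 = (P (Gset m X j)).toReal := by
  have hpt : ∀ ω, (0 : ℝ) ^ Scount m X j ω = Set.indicator (Gset m X j) 1 ω := by
    intro ω
    by_cases hω : ω ∈ Gset m X j
    · have : Scount m X j ω = 0 := by
        rw [Scount, Finset.card_eq_zero, Finset.filter_eq_empty_iff]
        intro u hu
        simp [hω u hu]
      rw [this, pow_zero, Set.indicator_of_mem hω]
      rfl
    · rw [Set.indicator_of_notMem hω]
      have : Scount m X j ω ≠ 0 := by
        rw [Scount, Ne, Finset.card_eq_zero, Finset.filter_eq_empty_iff]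
        intro hc
        apply hω
        intro u hu
        have := hc hu
        simpa using this
      rw [zero_pow this]
  rw [PhiFn, integral_congr_ae (Filter.Eventually.of_forall hpt)]
  exact integral_indicator_one (measurableSet_Gset hX j)

lemma Dset_prob (h : Hyp d m βl βh μ ν P J X) (jstar : ℕ) : ∀ N : ℕ,
    (P (Dset m X jstar N)).toReal = PhiFn P m X jstar 0 *
      ∏ n ∈ Finset.range N,
        phiFn m ν false (jstar + n) 0 ^ ∏ i ∈ Finset.range (jstar + n), m i := by
  intro N
  induction N with
  | zero =>
    have : Dset m X jstar 0 = Gset m X jstar := by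
      ext ω
      simp [Dset, Gset]
    rw [this, Finset.range_zero, Finset.prod_empty, mul_one, PhiFn_zero P h.hXmeas]
  | succ N ih =>
    haveI := h.hν false (jstar + N)
    have hstep := stepA_peel h jstar N (treeWords m (jstar + N)) (fun x hx => hx)
    rw [← Dset_succ] at hstep
    rw [hstep, ENNReal.toReal_mul, ENNReal.toReal_pow, ih,
      ← phiFn_zero_eq h.hν false (jstar + N), card_treeWords m (jstar + N),
      Finset.prod_range_succ]
    ring

end StepA

/-! ### Infinite products of numbers in `[0,1]` -/

section Prod01

lemma tendsto_prod_range_tprod {f : ℕ → ℝ} (h0 : ∀ n, 0 ≤ f n) (h1 : ∀ n, f n ≤ 1) :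
    Filter.Tendsto (fun N => ∏ n ∈ Finset.range N, f n) atTop (𝓝 (∏' n, f n)) := by
  have hanti : Antitone fun s : Finset ℕ => ∏ i ∈ s, f i := by
    intro s t hst
    calc ∏ i ∈ t, f i = (∏ i ∈ s, f i) * ∏ i ∈ t \ s, f i := by
          rw [mul_comm, Finset.prod_sdiff hst]
      _ ≤ (∏ i ∈ s, f i) * 1 := by
          refine mul_le_mul_of_nonneg_left ?_ (Finset.prod_nonneg fun i _ => h0 i)
          exact Finset.prod_le_one (fun i _ => h0 i) fun i _ => h1 i
      _ = ∏ i ∈ s, f i := mul_one _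
  have hbdd : BddBelow (Set.range fun s : Finset ℕ => ∏ i ∈ s, f i) := by
    refine ⟨0, ?_⟩
    rintro x ⟨s, rfl⟩
    exact Finset.prod_nonneg fun i _ => h0 i
  have hHP : HasProd f (⨅ s : Finset ℕ, ∏ i ∈ s, f i) :=
    tendsto_atTop_ciInf hanti hbdd
  rw [hHP.tprod_eq]
  exact hHP.tendsto_prod_nat

end Prod01

theorem stmt2
    (d : ℕ) (m : ℕ → ℕ) (βl βh : ℝ)
    (μ : ∀ j : ℕ, Measure (Fin (m j) → ℝ))
    (ν : Bool → ∀ j : ℕ, Measure (Fin (m j) → Bool))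
    (Ω : Type) [MeasurableSpace Ω] (P : Measure Ω)
    (J : List ℕ → Ω → Set (EuclideanSpace ℝ (Fin d)))
    (X : List ℕ → Ω → Bool)
    (h : Hyp d m βl βh μ ν P J X)
    (hd0 : 0 ≤ dstar m μ ν)
    (jstar : ℕ) (hjstar : fExt m ν jstar = 0) :
    (P {ω | ThetaSet m J X ω = ∅}).toReal =
      PhiFn P m X jstar 0 *
        ∏' n : ℕ, phiFn m ν false (jstar + n) 0 ^ ∏ i ∈ Finset.range (jstar + n), m i := by
  classical
  haveI := h.hP
  -- all the iterated generating functions vanish beyond `jstar`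
  have hz : ∀ j, jstar ≤ j → ∀ n, phiComp m ν j n 0 = 0 :=
    phiComp_eq_zero_of_fExt h.hm h.hν hjstar
  -- squeeze `{Θ = ∅}` between `Eset` and `Eset ∪ (null set)`
  have hEsub : Eset m X jstar ⊆ {ω | ThetaSet m J X ω = ∅} :=
    eset_subset_theta_empty (J := J) jstar
  have hTsub := theta_empty_subset (J := J) h.hJcompact h.hJdiam h.hAsub (X := X) jstar
  have hN0 := nullset h hz
  have hPeq : P {ω | ThetaSet m J X ω = ∅} = P (Eset m X jstar) := by
    refine le_antisymm ?_ (measure_mono hEsub)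
    refine (measure_mono hTsub).trans ?_
    refine (measure_union_le _ _).trans ?_
    rw [hN0, add_zero]
  rw [hPeq]
  -- the probability of `Eset` is the limit of the probabilities of the `Dset`s
  set c : ℕ → ℝ := fun n =>
    phiFn m ν false (jstar + n) 0 ^ ∏ i ∈ Finset.range (jstar + n), m i with hc
  have hc0 : ∀ n, 0 ≤ c n :=
    fun n => pow_nonneg (phiFn_nonneg h.hν false (jstar + n) le_rfl) _
  have hc1 : ∀ n, c n ≤ 1 :=
    fun n => pow_le_one₀ (phiFn_nonneg h.hν false (jstar + n) le_rfl)
      (phiFn_le_one h.hν false (jstar + n) le_rfl zero_le_one)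
  have hanti : Antitone fun N => Dset m X jstar N := by
    intro N N' hNN ω hω
    refine Set.mem_iInter.mpr fun n => Set.mem_iInter.mpr fun hn => ?_
    have hn' : n ∈ Finset.range (N' + 1) := by
      simp only [Finset.mem_range] at hn ⊢
      omega
    exact Set.mem_iInter.mp (Set.mem_iInter.mp hω n) hn'
  have hlim1 : Filter.Tendsto (fun N => P (Dset m X jstar N)) atTop
      (𝓝 (P (Eset m X jstar))) := by
    have := tendsto_measure_iInter_atTop (μ := P) (s := fun N => Dset m X jstar N)
      (fun N => (measurableSet_Dset h.hXmeas jstar N).nullMeasurableSet) hanti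
      ⟨0, measure_ne_top _ _⟩
    rwa [iInter_Dset] at this
  have hlim2 : Filter.Tendsto (fun N => (P (Dset m X jstar N)).toReal) atTop
      (𝓝 ((P (Eset m X jstar)).toReal)) :=
    (ENNReal.tendsto_toReal (measure_ne_top _ _)).comp hlim1
  have heqfun : (fun N => (P (Dset m X jstar N)).toReal)
      = fun N => PhiFn P m X jstar 0 * ∏ n ∈ Finset.range N, c n :=
    funext fun N => Dset_prob h jstar N
  rw [heqfun] at hlim2
  have hlim3 : Filter.Tendsto (fun N => PhiFn P m X jstar 0 * ∏ n ∈ Finset.range N, c n)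
      atTop (𝓝 (PhiFn P m X jstar 0 * ∏' n, c n)) :=
    (tendsto_prod_range_tprod hc0 hc1).const_mul _
  exact tendsto_nhds_unique hlim2 hlim3
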